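/- Let A, B be self-adjoint bounded operators on a complex Hilbert space with spectra contained in (a, ∞) for some real a, and suppose A − B ≥ m·I for some m > 0. Then for every λ ≤ a, (B − λ·I)⁻¹ − (A − λ·I)⁻¹ ≥ m‖B − λ·I‖⁻¹(‖B − λ·I‖ + m)⁻¹ · I > 0. -/

import Mathlib

theorem resolvent_difference_lower_bound
    {H : Type*} [NormedAddCommGroup H] [InnerProductSpace ℂ H] [CompleteSpace H] [Nontrivial H]
    (a : ℝ) (A B : H →L[ℂ] H) (hA : IsSelfAdjoint A) (hB : IsSelfAdjoint B)
    (hAsp : spectrum ℝ A ⊆ Set.Ioi a) (hBsp : spectrum ℝ B ⊆ Set.Ioi a)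
    (m : ℝ) (hm : 0 < m) (hAB : m • (1 : H →L[ℂ] H) ≤ A - B) :
    ∀ lam : ℝ, lam ≤ a →
      (m * ‖B - lam • (1 : H →L[ℂ] H)‖⁻¹ * (‖B - lam • (1 : H →L[ℂ] H)‖ + m)⁻¹) •
          (1 : H →L[ℂ] H) ≤
        Ring.inverse (B - lam • (1 : H →L[ℂ] H)) - Ring.inverse (A - lam • (1 : H →L[ℂ] H)) ∧
      0 < m * ‖B - lam • (1 : H →L[ℂ] H)‖⁻¹ * (‖B - lam • (1 : H →L[ℂ] H)‖ + m)⁻¹ := by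
  intro lam hlam
  set B' : H →L[ℂ] H := B - lam • 1 with hB'def
  set A' : H →L[ℂ] H := A - lam • 1 with hA'def
  have halg : (lam • (1 : H →L[ℂ] H)) = algebraMap ℝ _ lam :=
    (Algebra.algebraMap_eq_smul_one lam).symm
  have hsm : IsSelfAdjoint (lam • (1 : H →L[ℂ] H)) := by
    rw [halg]; exact IsSelfAdjoint.algebraMap _ (star_trivial lam)
  have hB'sa : IsSelfAdjoint B' := hB.sub hsm
  have hA'sa : IsSelfAdjoint A' := hA.sub hsm
  have hspecB' : spectrum ℝ B' ⊆ Set.Ioi 0 := by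
    rw [hB'def, halg, ← spectrum.sub_singleton_eq]
    rintro x ⟨y, hy, z, hz, rfl⟩
    simp only [Set.mem_singleton_iff] at hz
    subst hz
    have := hBsp hy
    simp only [Set.mem_Ioi] at this ⊢
    linarith
  have hspecA' : spectrum ℝ A' ⊆ Set.Ioi 0 := by
    rw [hA'def, halg, ← spectrum.sub_singleton_eq]
    rintro x ⟨y, hy, z, hz, rfl⟩
    simp only [Set.mem_singleton_iff] at hz
    subst hz
    have := hAsp hy
    simp only [Set.mem_Ioi] at this ⊢
    linarith
  have hB'u : IsUnit B' :=
    spectrum.isUnit_of_zero_notMem (R := ℝ) fun h => by simpa using hspecB' h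
  have hA'u : IsUnit A' :=
    spectrum.isUnit_of_zero_notMem (R := ℝ) fun h => by simpa using hspecA' h
  have hB'0 : (0 : H →L[ℂ] H) ≤ B' := by
    have := algebraMap_le_of_le_spectrum (R := ℝ) (a := B')
      (fun x hx => (hspecB' hx).le) hB'sa
    simpa using this
  have hr : (0 : ℝ) < ‖B'‖ := norm_pos_iff.mpr hB'u.ne_zero
  have hrm : (0 : ℝ) < ‖B'‖ + m := by linarith
  have hcpos : 0 < m * ‖B'‖⁻¹ * (‖B'‖ + m)⁻¹ :=
    mul_pos (mul_pos hm (inv_pos.mpr hr)) (inv_pos.mpr hrm)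
  refine ⟨?_, hcpos⟩
  -- B' ≤ ‖B'‖ • 1
  have h6 : B' ≤ ‖B'‖ • (1 : H →L[ℂ] H) := by
    simpa [Algebra.algebraMap_eq_smul_one] using hB'sa.le_algebraMap_norm_self
  -- m • 1 is a unit, nonneg
  have hm1u : IsUnit (m • (1 : H →L[ℂ] H)) := by
    rw [← Algebra.algebraMap_eq_smul_one m]
    exact (IsUnit.mk0 m hm.ne').map (algebraMap ℝ (H →L[ℂ] H))
  have hm10 : (0 : H →L[ℂ] H) ≤ m • 1 := by
    rw [← Algebra.algebraMap_eq_smul_one m, ← cfc_const m B' hB'sa]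
    exact cfc_nonneg fun x _ => hm.le
  -- B' + m•1 ≤ A'
  have hABeq : A' - B' = A - B := by rw [hA'def, hB'def]; abel
  have h7 : B' + m • (1 : H →L[ℂ] H) ≤ A' := by
    have h := hAB
    rw [← hABeq, le_sub_iff_add_le] at h
    simpa [add_comm] using h
  have hBm0 : (0 : H →L[ℂ] H) ≤ B' + m • 1 := add_nonneg hB'0 hm10
  have hBmu : IsUnit (B' + m • (1 : H →L[ℂ] H)) :=
    CStarAlgebra.isUnit_of_le _ (le_add_of_nonneg_left hB'0)
      (IsStrictlyPositive.iff_of_unital.mpr ⟨hm10, hm1u⟩)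
  -- inverse antitone
  have h8 : Ring.inverse A' ≤ Ring.inverse (B' + m • (1 : H →L[ℂ] H)) := by
    have key := CStarAlgebra.inv_le_inv (A := H →L[ℂ] H) (a := hBmu.unit) (b := hA'u.unit)
      (by rw [hBmu.unit_spec]; exact hBm0) (by rw [hBmu.unit_spec, hA'u.unit_spec]; exact h7)
    rw [← hBmu.unit_spec, ← hA'u.unit_spec, Ring.inverse_unit, Ring.inverse_unit]
    exact key
  -- cfc identities
  have hcontinv : ContinuousOn (fun x : ℝ => x⁻¹) (spectrum ℝ B') :=
    ContinuousOn.inv₀ continuousOn_id fun x hx => (hspecB' hx).ne'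
  have hcontinv2 : ContinuousOn (fun x : ℝ => (x + m)⁻¹) (spectrum ℝ B') :=
    ContinuousOn.inv₀ (by fun_prop) fun x hx => by have := hspecB' hx; simp at this; positivity
  have hinvB' : Ring.inverse B' = cfc (fun x : ℝ => x⁻¹) B' := by
    rw [← hB'u.unit_spec, Ring.inverse_unit,
      cfc_inv_id (R := ℝ) hB'u.unit (by rw [hB'u.unit_spec]; exact hB'sa)]
  have hcfc_add : cfc (fun x : ℝ => x + m) B' = B' + m • (1 : H →L[ℂ] H) := by
    rw [cfc_add (a := B') (fun x : ℝ => x) (fun _ => m) (by fun_prop) (by fun_prop),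
      cfc_id' ℝ B' hB'sa, cfc_const m B' hB'sa, Algebra.algebraMap_eq_smul_one]
  have hinvBm : Ring.inverse (B' + m • (1 : H →L[ℂ] H)) = cfc (fun x : ℝ => (x + m)⁻¹) B' := by
    rw [← hcfc_add, ← cfc_inv (fun x : ℝ => x + m) B'
      (fun x hx => by have := hspecB' hx; simp at this; positivity) (by fun_prop) hB'sa]
  have hdiff : Ring.inverse B' - Ring.inverse (B' + m • (1 : H →L[ℂ] H)) =
      cfc (fun x : ℝ => x⁻¹ - (x + m)⁻¹) B' := by
    rw [hinvB', hinvBm, ← cfc_sub _ _ B' hcontinv hcontinv2]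
  -- pointwise bound
  have key : ∀ x ∈ spectrum ℝ B',
      m * ‖B'‖⁻¹ * (‖B'‖ + m)⁻¹ ≤ x⁻¹ - (x + m)⁻¹ := by
    intro x hx
    have hx0 : (0 : ℝ) < x := hspecB' hx
    have hxr : x ≤ ‖B'‖ := (Real.le_norm_self x).trans (spectrum.norm_le_norm_of_mem hx)
    have hxm : (0 : ℝ) < x + m := by linarith
    rw [inv_sub_inv hx0.ne' hxm.ne', show x + m - x = m by ring,
      show m * ‖B'‖⁻¹ * (‖B'‖ + m)⁻¹ = m / (‖B'‖ * (‖B'‖ + m)) by rw [div_eq_mul_inv, mul_inv]; ring]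
    gcongr
  have hmono : (m * ‖B'‖⁻¹ * (‖B'‖ + m)⁻¹) • (1 : H →L[ℂ] H) ≤
      cfc (fun x : ℝ => x⁻¹ - (x + m)⁻¹) B' := by
    calc (m * ‖B'‖⁻¹ * (‖B'‖ + m)⁻¹) • (1 : H →L[ℂ] H)
        = cfc (fun _ : ℝ => m * ‖B'‖⁻¹ * (‖B'‖ + m)⁻¹) B' := by
          rw [cfc_const _ B' hB'sa, Algebra.algebraMap_eq_smul_one]
      _ ≤ _ := cfc_mono key (by fun_prop) (hcontinv.sub hcontinv2)
  calc (m * ‖B'‖⁻¹ * (‖B'‖ + m)⁻¹) • (1 : H →L[ℂ] H)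
      ≤ Ring.inverse B' - Ring.inverse (B' + m • (1 : H →L[ℂ] H)) := by rw [hdiff]; exact hmono
    _ ≤ Ring.inverse B' - Ring.inverse A' := sub_le_sub_left h8 _
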